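/- Let G be a finite connected simple graph with at least two vertices, let G' be its doubled graph, and let b be a natural number. Then G' has a dominating set of size at most b if and only if G has a total dominating set of size at most b. -/

import Mathlib

/-- The doubled graph `G'` of `G`: each vertex `v` gets a disjoint copy `v'`
(`Sum.inl v` is `v`, `Sum.inr v` is `v'`), and `E(G') = E(G) ∪
{{u,v'}, {u',v}, {u',v'} : {u,v} ∈ E(G)}`. -/
def doubled {α : Type*} (G : SimpleGraph α) : SimpleGraph (α ⊕ α) where
  Adj x y := G.Adj (Sum.elim id id x) (Sum.elim id id y)
  symm := ⟨fun _ _ h => G.adj_symm h⟩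
  loopless := ⟨fun _ h => G.irrefl h⟩

lemma exists_neighbor {α : Type*} [Fintype α] (G : SimpleGraph α)
    (hconn : G.Connected) (hcard : 2 ≤ Fintype.card α) (w : α) :
    ∃ u, G.Adj u w := by
  have : Nontrivial α := Fintype.one_lt_card_iff_nontrivial.mp hcard
  obtain ⟨v, hv⟩ := exists_ne w
  obtain ⟨q⟩ := hconn.preconnected w v
  have hq : ¬ q.Nil := SimpleGraph.Walk.not_nil_of_ne hv.symm
  exact ⟨q.getVert 1, (q.adj_snd hq).symm⟩

/-- For a finite connected graph `G` with at least two vertices and a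
natural number `b`: the doubled graph `G'` has a dominating set of size at most `b` iff
`G` has a total dominating set of size at most `b`. -/
theorem stmt_13 {α : Type*} [Fintype α] (G : SimpleGraph α)
    (hconn : G.Connected) (hcard : 2 ≤ Fintype.card α) (b : ℕ) :
    (∃ X : Set (α ⊕ α),
        (∀ w : α ⊕ α, w ∈ X ∨ ∃ x ∈ X, (doubled G).Adj x w) ∧ X.ncard ≤ b) ↔
    (∃ X : Set α, (∀ w : α, ∃ x ∈ X, G.Adj x w) ∧ X.ncard ≤ b) := by
  classical
  constructor
  · rintro ⟨X, hdom, hX⟩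
    choose nbf hnbf using exists_neighbor G hconn hcard
    set p : α ⊕ α → α := Sum.elim id id with hp
    set Bad : α → Prop := fun v => ¬∃ x ∈ X, G.Adj (p x) v with hBad
    set g : α ⊕ α → α := fun x => match x with
      | Sum.inl v => v
      | Sum.inr v => if Bad v then nbf v else v with hg
    refine ⟨g '' X, ?_, le_trans (Set.ncard_image_le (Set.toFinite X)) hX⟩
    intro w
    by_cases hB : Bad w
    · have h1 : Sum.inr w ∈ X := by
        rcases hdom (Sum.inr w) with h | ⟨x, hx, hadj⟩
        · exact h
        · exact absurd ⟨x, hx, hadj⟩ hB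
      refine ⟨nbf w, ⟨Sum.inr w, h1, ?_⟩, hnbf w⟩
      simp [hg, if_pos hB]
    · obtain ⟨x, hx, hadj⟩ := not_not.mp hB
      cases x with
      | inl v => exact ⟨v, ⟨Sum.inl v, hx, rfl⟩, hadj⟩
      | inr v =>
        by_cases hBv : Bad v
        · have hin : Sum.inl v ∈ X := by
            rcases hdom (Sum.inl v) with h | ⟨y, hy, hadjy⟩
            · exact h
            · exact absurd ⟨y, hy, hadjy⟩ hBv
          exact ⟨v, ⟨Sum.inl v, hin, rfl⟩, hadj⟩
        · exact ⟨v, ⟨Sum.inr v, hx, by simp [hg, if_neg hBv]⟩, hadj⟩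
  · rintro ⟨Y, hdom, hY⟩
    refine ⟨Sum.inl '' Y, fun w => ?_, ?_⟩
    · obtain ⟨x, hx, hadj⟩ := hdom (Sum.elim id id w)
      exact Or.inr ⟨Sum.inl x, ⟨x, hx, rfl⟩, hadj⟩
    · rw [Set.ncard_image_of_injective _ Sum.inl_injective]; exact hY
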